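/- For a positive left-hand formula, the diamond semantics simplifies: if δ is a positive HMLU formula then p ⊨ δ⟨α⟩ψ if and only if there exist p', p'' with p ↠_τ p' →_α p'', p' ⊨ δ, and p'' ⊨ ψ. -/

import Mathlib

variable {X A : Type*}

/-- Formulas of Hennessy-Milner Logic with Until. `none` is the silent action τ. -/
inductive HMLU (A : Type*) where
  | top : HMLU A
  | neg : HMLU A → HMLU A
  | and : HMLU A → HMLU A → HMLU A
  | dia : HMLU A → Option A → HMLU A → HMLU A

/-- Satisfaction: `p ⊨ δ⟨α⟩ψ` iff there is a τ-path from `p` along which every state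
satisfies `δ`, ending in a state that `α`-steps to a state satisfying `ψ`. -/
def Sat (step : Option A → X → X → Prop) : HMLU A → X → Prop
  | .top, _ => True
  | .neg φ, p => ¬ Sat step φ p
  | .and φ ψ, p => Sat step φ p ∧ Sat step ψ p
  | .dia δ α ψ, p => ∃ p' p'', Sat step δ p ∧
      Relation.ReflTransGen (fun x y => step none x y ∧ Sat step δ y) p p' ∧
      step α p' p'' ∧ Sat step ψ p''

mutual
  /-- Positive HMLU formulas. -/
  inductive Positive : HMLU A → Prop
    | top : Positive .top
    | neg {φ : HMLU A} : Negative φ → Positive (.neg φ)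
    | and {φ ψ : HMLU A} : Positive φ → Positive ψ → Positive (.and φ ψ)
    | dia {δ ψ : HMLU A} {α : Option A} : Positive δ → Positive (.dia δ α ψ)
  /-- Negative HMLU formulas. -/
  inductive Negative : HMLU A → Prop
    | top : Negative .top
    | neg {φ : HMLU A} : Positive φ → Negative (.neg φ)
    | and {φ ψ : HMLU A} : Negative φ → Negative ψ → Negative (.and φ ψ)
end

/-- Good formulas: every diamond subformula has a positive left-hand side. -/
inductive Good : HMLU A → Prop
  | top : Good .top
  | neg {φ : HMLU A} : Good φ → Good (.neg φ)
  | and {φ ψ : HMLU A} : Good φ → Good ψ → Good (.and φ ψ)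
  | dia {δ ψ : HMLU A} {α : Option A} : Positive δ → Good δ → Good ψ → Good (.dia δ α ψ)

theorem mono_key (step : Option A → X → X → Prop) (δ : HMLU A) :
    (Positive δ → ∀ p p' : X, Relation.ReflTransGen (step none) p p' →
      Sat step δ p' → Sat step δ p) ∧
    (Negative δ → ∀ p p' : X, Relation.ReflTransGen (step none) p p' →
      Sat step δ p → Sat step δ p') := by
  induction δ with
  | top => exact ⟨fun _ _ _ _ _ => trivial, fun _ _ _ _ _ => trivial⟩
  | neg φ ih =>
    constructor
    · intro hpos p p' hpath hsat
      cases hpos with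
      | neg hneg => exact fun h => hsat (ih.2 hneg p p' hpath h)
    · intro hneg p p' hpath hsat
      cases hneg with
      | neg hpos => exact fun h => hsat (ih.1 hpos p p' hpath h)
  | and φ ψ ihφ ihψ =>
    constructor
    · intro hpos p p' hpath hsat
      cases hpos with
      | and h1 h2 => exact ⟨ihφ.1 h1 p p' hpath hsat.1, ihψ.1 h2 p p' hpath hsat.2⟩
    · intro hneg p p' hpath hsat
      cases hneg with
      | and h1 h2 => exact ⟨ihφ.2 h1 p p' hpath hsat.1, ihψ.2 h2 p p' hpath hsat.2⟩
  | dia δ α ψ ihδ ihψ =>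
    constructor
    · intro hpos p p' hpath hsat
      cases hpos with
      | dia hδ =>
        obtain ⟨q, q', hδp', hpath', hstep, hψ⟩ := hsat
        have hδp : Sat step δ p := ihδ.1 hδ p p' hpath hδp'
        -- lift the plain τ-path to a decorated one
        have lift : ∀ r : X, Relation.ReflTransGen (step none) r p' →
            Relation.ReflTransGen (fun x y => step none x y ∧ Sat step δ y) r p' := by
          intro r h
          induction h using Relation.ReflTransGen.head_induction_on with
          | refl => exact Relation.ReflTransGen.refl
          | head hs hrest ih =>
            exact Relation.ReflTransGen.head ⟨hs, ihδ.1 hδ _ p' hrest hδp'⟩ ih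
        exact ⟨q, q', hδp, (lift p hpath).trans hpath', hstep, hψ⟩
    · intro hneg
      cases hneg

theorem nicer_diamond (step : Option A → X → X → Prop)
    (htau : ∀ p : X, step none p p) (δ : HMLU A) (hδ : Positive δ)
    (α : Option A) (ψ : HMLU A) (p : X) :
    Sat step (.dia δ α ψ) p ↔
      ∃ p' p'', Relation.ReflTransGen (step none) p p' ∧ step α p' p'' ∧
        Sat step δ p' ∧ Sat step ψ p'' := by
  constructor
  · rintro ⟨p', p'', _, hpath, hstep, hψ⟩
    exact ⟨p', p'', Relation.ReflTransGen.mono (p := step none) (fun _ _ h => h.1) _ _ hpath, hstep, by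
      rcases hpath.cases_head with h | ⟨c, hc, _⟩
      · subst h; assumption
      · rcases (Relation.ReflTransGen.cases_tail_iff _ _ _).mp hpath with h | ⟨c, _, hc⟩
        · subst h; assumption
        · exact hc.2, hψ⟩
  · rintro ⟨p', p'', hpath, hstep, hδp', hψ⟩
    have hδp : Sat step δ p := (mono_key step δ).1 hδ p p' hpath hδp'
    have lift : Relation.ReflTransGen (fun x y => step none x y ∧ Sat step δ y) p p' := by
      induction hpath using Relation.ReflTransGen.head_induction_on with
      | refl => exact Relation.ReflTransGen.refl
      | head hs hrest ih =>
        have h := (mono_key step δ).1 hδ _ p' hrest hδp'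
        exact Relation.ReflTransGen.head ⟨hs, h⟩ (ih h)
    exact ⟨p', p'', hδp, lift, hstep, hψ⟩
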